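/- There is no real fermionic unextendible product basis of five orthogonal decomposable states in $\wedge^2 \mathbb{C}^4$: for any five pairwise orthogonal nonzero decomposable 2-vectors $|\psi_i\rangle = |a_i\rangle \wedge |b_i\rangle$, $i = 1,\dots,5$, in $\wedge^2 \mathbb{C}^4$ in which all vectors $|a_i\rangle, |b_i\rangle$ have real entries, there exists a nonzero decomposable 2-vector with real entries orthogonal to all five. -/

import Mathlib

open scoped InnerProductSpace

noncomputable section

/-- The `N`-fold tensor power of `ℂ^M`, realized as the Euclidean space with
orthonormal basis indexed by multi-indices `Fin N → Fin M`. -/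
abbrev TensorPow (N M : ℕ) : Type := EuclideanSpace ℂ (Fin N → Fin M)

/-- The wedge (Slater determinant) of a family of `N` vectors in `ℂ^M`:
`|v 0⟩ ∧ ⋯ ∧ |v (N-1)⟩ = ∑ σ, sgn σ • |v σ(0), …, v σ(N-1)⟩`. -/
def wedge {N M : ℕ} (v : Fin N → EuclideanSpace ℂ (Fin M)) : TensorPow N M :=
  WithLp.toLp 2 (fun x => ∑ σ : Equiv.Perm (Fin N), ((Equiv.Perm.sign σ : ℤ) : ℂ) * ∏ k, v (σ k) (x k))

/-- The exterior power `⋀^N ℂ^M`, i.e. the subspace of antisymmetric tensors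
in `(ℂ^M)^{⊗N}`. -/
def exteriorPow (N M : ℕ) : Submodule ℂ (TensorPow N M) where
  carrier := {ψ | ∀ σ : Equiv.Perm (Fin N), ∀ x : Fin N → Fin M,
    ψ (x ∘ σ) = ((Equiv.Perm.sign σ : ℤ) : ℂ) * ψ x}
  add_mem' := by
    intro a b ha hb σ x
    have h1 := ha σ x
    have h2 := hb σ x
    show a (x ∘ σ) + b (x ∘ σ) = ((Equiv.Perm.sign σ : ℤ) : ℂ) * (a x + b x)
    rw [h1, h2]; ring
  zero_mem' := by
    intro σ x
    show (0 : ℂ) = ((Equiv.Perm.sign σ : ℤ) : ℂ) * (0 : ℂ)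
    ring
  smul_mem' := by
    intro c a ha σ x
    have h1 := ha σ x
    show c * a (x ∘ σ) = ((Equiv.Perm.sign σ : ℤ) : ℂ) * (c * a x)
    rw [h1]; ring

/-- A decomposable (Slater determinant) vector in `⋀^N ℂ^M`. -/
def IsSlater {N M : ℕ} (ψ : TensorPow N M) : Prop :=
  ∃ v : Fin N → EuclideanSpace ℂ (Fin M), ψ = wedge v


namespace FUPBAux
open Matrix


lemma perm2_sum (f : Equiv.Perm (Fin 2) → ℂ) : ∑ σ, f σ = f 1 + f (Equiv.swap 0 1) := by
  rw [show (Finset.univ : Finset (Equiv.Perm (Fin 2))) = {1, Equiv.swap 0 1} by decide]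
  rw [Finset.sum_pair (by decide)]

lemma wedge_pair (a b : EuclideanSpace ℂ (Fin 4)) (x : Fin 2 → Fin 4) :
    wedge ![a, b] x = a (x 0) * b (x 1) - b (x 0) * a (x 1) := by
  simp only [wedge, WithLp.ofLp_toLp]
  rw [perm2_sum]
  simp [Fin.prod_univ_two, Equiv.swap_apply_left, Equiv.swap_apply_right]
  ring

def cv (A : Fin 4 → ℝ) : EuclideanSpace ℂ (Fin 4) := WithLp.toLp 2 (fun m => (A m : ℂ))

def pluck (A B : Fin 4 → ℝ) : Fin 6 → ℝ :=
  ![A 0 * B 1 - A 1 * B 0, A 0 * B 2 - A 2 * B 0, A 0 * B 3 - A 3 * B 0,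
    A 1 * B 2 - A 2 * B 1, A 1 * B 3 - A 3 * B 1, A 2 * B 3 - A 3 * B 2]

lemma pluck0 (A B : Fin 4 → ℝ) : pluck A B 0 = A 0 * B 1 - A 1 * B 0 := rfl
lemma pluck1 (A B : Fin 4 → ℝ) : pluck A B 1 = A 0 * B 2 - A 2 * B 0 := rfl
lemma pluck2 (A B : Fin 4 → ℝ) : pluck A B 2 = A 0 * B 3 - A 3 * B 0 := rfl
lemma pluck3 (A B : Fin 4 → ℝ) : pluck A B 3 = A 1 * B 2 - A 2 * B 1 := rfl
lemma pluck4 (A B : Fin 4 → ℝ) : pluck A B 4 = A 1 * B 3 - A 3 * B 1 := rfl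
lemma pluck5 (A B : Fin 4 → ℝ) : pluck A B 5 = A 2 * B 3 - A 3 * B 2 := rfl

/-- The Plücker quadric. -/
def Qf (q : Fin 6 → ℝ) : ℝ := q 0 * q 5 - q 1 * q 4 + q 2 * q 3

lemma Qf_pluck (A B : Fin 4 → ℝ) : Qf (pluck A B) = 0 := by
  simp only [Qf, pluck0, pluck1, pluck2, pluck3, pluck4, pluck5]; ring

lemma antisym_of_eqs (A B : Fin 4 → ℝ)
    (e0 : A 0 * B 1 - A 1 * B 0 = 0) (e1 : A 0 * B 2 - A 2 * B 0 = 0)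
    (e2 : A 0 * B 3 - A 3 * B 0 = 0) (e3 : A 1 * B 2 - A 2 * B 1 = 0)
    (e4 : A 1 * B 3 - A 3 * B 1 = 0) (e5 : A 2 * B 3 - A 3 * B 2 = 0) :
    ∀ m n : Fin 4, A m * B n - B m * A n = 0 := by
  intro m n
  fin_cases m <;> fin_cases n <;> first
  | exact (by ring : A 0 * B 0 - B 0 * A 0 = 0)
  | exact (by ring : A 1 * B 1 - B 1 * A 1 = 0)
  | exact (by ring : A 2 * B 2 - B 2 * A 2 = 0)
  | exact (by ring : A 3 * B 3 - B 3 * A 3 = 0)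
  | exact (by linarith : A 0 * B 1 - B 0 * A 1 = 0)
  | exact (by linarith : A 0 * B 2 - B 0 * A 2 = 0)
  | exact (by linarith : A 0 * B 3 - B 0 * A 3 = 0)
  | exact (by linarith : A 1 * B 2 - B 1 * A 2 = 0)
  | exact (by linarith : A 1 * B 3 - B 1 * A 3 = 0)
  | exact (by linarith : A 2 * B 3 - B 2 * A 3 = 0)
  | exact (by linarith : A 1 * B 0 - B 1 * A 0 = 0)
  | exact (by linarith : A 2 * B 0 - B 2 * A 0 = 0)
  | exact (by linarith : A 3 * B 0 - B 3 * A 0 = 0)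
  | exact (by linarith : A 2 * B 1 - B 2 * A 1 = 0)
  | exact (by linarith : A 3 * B 1 - B 3 * A 1 = 0)
  | exact (by linarith : A 3 * B 2 - B 3 * A 2 = 0)

lemma wedge_entry (A B : Fin 4 → ℝ) (m n : Fin 4) :
    wedge ![cv A, cv B] ![m, n] = ((A m * B n - B m * A n : ℝ) : ℂ) := by
  rw [wedge_pair]
  simp only [Matrix.cons_val_zero, Matrix.cons_val_one, Matrix.head_cons, cv, WithLp.ofLp_toLp]
  push_cast
  ring

lemma wedge_eq_zero_iff (A B : Fin 4 → ℝ) :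
    wedge ![cv A, cv B] = 0 ↔ pluck A B = 0 := by
  constructor
  · intro h
    have hv : ∀ m n : Fin 4, A m * B n - B m * A n = 0 := by
      intro m n
      have h1 : wedge ![cv A, cv B] ![m, n] = 0 := by rw [h]; simp
      rw [wedge_entry] at h1
      exact Complex.ofReal_eq_zero.mp h1
    funext k
    fin_cases k <;> first
    | exact (by rw [pluck0]; linarith [hv 0 1, hv 1 0] : pluck A B 0 = 0)
    | exact (by rw [pluck1]; linarith [hv 0 2] : pluck A B 1 = 0)
    | exact (by rw [pluck2]; linarith [hv 0 3] : pluck A B 2 = 0)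
    | exact (by rw [pluck3]; linarith [hv 1 2] : pluck A B 3 = 0)
    | exact (by rw [pluck4]; linarith [hv 1 3] : pluck A B 4 = 0)
    | exact (by rw [pluck5]; linarith [hv 2 3] : pluck A B 5 = 0)
  · intro h
    have e0 := congrFun h 0; have e1 := congrFun h 1; have e2 := congrFun h 2
    have e3 := congrFun h 3; have e4 := congrFun h 4; have e5 := congrFun h 5
    rw [pluck0] at e0; rw [pluck1] at e1; rw [pluck2] at e2
    rw [pluck3] at e3; rw [pluck4] at e4; rw [pluck5] at e5
    simp only [Pi.zero_apply] at e0 e1 e2 e3 e4 e5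
    have hv := antisym_of_eqs A B e0 e1 e2 e3 e4 e5
    ext x
    have hx : x = ![x 0, x 1] := by
      funext i; fin_cases i <;> rfl
    have hz : wedge ![cv A, cv B] x = 0 := by
      rw [hx, wedge_entry, hv (x 0) (x 1)]; norm_num
    rw [hz]; simp

lemma inner_wedge (A B V W : Fin 4 → ℝ) :
    ⟪wedge ![cv A, cv B], wedge ![cv V, cv W]⟫_ℂ
      = ((2 * ∑ k, pluck A B k * pluck V W k : ℝ) : ℂ) := by
  have h : ⟪wedge ![cv A, cv B], wedge ![cv V, cv W]⟫_ℂ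
      = ∑ x : Fin 2 → Fin 4, (starRingEnd ℂ) (wedge ![cv A, cv B] x) * wedge ![cv V, cv W] x := by
    simp [PiLp.inner_apply]; exact Finset.sum_congr rfl fun _ _ => mul_comm _ _
  rw [h]
  rw [show (∑ x : Fin 2 → Fin 4, (starRingEnd ℂ) (wedge ![cv A, cv B] x) * wedge ![cv V, cv W] x)
      = ∑ p : Fin 4 × Fin 4, (starRingEnd ℂ) (wedge ![cv A, cv B] ![p.1, p.2]) * wedge ![cv V, cv W] ![p.1, p.2] from
    Fintype.sum_equiv (finTwoArrowEquiv (Fin 4)) _ _ (fun x => by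
      have hx : x = ![x 0, x 1] := by funext i; fin_cases i <;> rfl
      exact congrArg₂ (fun u v : Fin 2 → Fin 4 =>
        (starRingEnd ℂ) (wedge ![cv A, cv B] u) * wedge ![cv V, cv W] v) hx hx)]
  rw [Fintype.sum_prod_type]
  simp only [wedge_entry, Complex.conj_ofReal]
  rw [Fin.sum_univ_six]
  simp only [Fin.sum_univ_four, pluck0, pluck1, pluck2, pluck3, pluck4, pluck5]
  push_cast
  ring


open Matrix


def Jm : Fin 6 → Fin 6 → ℝ :=
  ![![0,0,0,0,0,1], ![0,0,0,0,-1,0], ![0,0,0,1,0,0],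
    ![0,0,1,0,0,0], ![0,-1,0,0,0,0], ![1,0,0,0,0,0]]

lemma quad_J (x : Fin 6 → ℝ) : ∑ m, ∑ n, x m * Jm m n * x n = 2 * Qf x := by
  rw [Fin.sum_univ_six]
  simp only [Fin.sum_univ_six]
  rw [show Jm 0 0 = 0 from rfl, show Jm 0 1 = 0 from rfl, show Jm 0 2 = 0 from rfl,
    show Jm 0 3 = 0 from rfl, show Jm 0 4 = 0 from rfl, show Jm 0 5 = 1 from rfl,
    show Jm 1 0 = 0 from rfl, show Jm 1 1 = 0 from rfl, show Jm 1 2 = 0 from rfl,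
    show Jm 1 3 = 0 from rfl, show Jm 1 4 = -1 from rfl, show Jm 1 5 = 0 from rfl,
    show Jm 2 0 = 0 from rfl, show Jm 2 1 = 0 from rfl, show Jm 2 2 = 0 from rfl,
    show Jm 2 3 = 1 from rfl, show Jm 2 4 = 0 from rfl, show Jm 2 5 = 0 from rfl,
    show Jm 3 0 = 0 from rfl, show Jm 3 1 = 0 from rfl, show Jm 3 2 = 1 from rfl,
    show Jm 3 3 = 0 from rfl, show Jm 3 4 = 0 from rfl, show Jm 3 5 = 0 from rfl,
    show Jm 4 0 = 0 from rfl, show Jm 4 1 = -1 from rfl, show Jm 4 2 = 0 from rfl,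
    show Jm 4 3 = 0 from rfl, show Jm 4 4 = 0 from rfl, show Jm 4 5 = 0 from rfl,
    show Jm 5 0 = 1 from rfl, show Jm 5 1 = 0 from rfl, show Jm 5 2 = 0 from rfl,
    show Jm 5 3 = 0 from rfl, show Jm 5 4 = 0 from rfl, show Jm 5 5 = 0 from rfl]
  rw [Qf]; ring

lemma trace_J : Matrix.trace (Matrix.of Jm) = 0 := by
  rw [Matrix.trace]
  rw [Fin.sum_univ_six]
  rw [show Matrix.diag (Matrix.of Jm) 0 = 0 from rfl, show Matrix.diag (Matrix.of Jm) 1 = 0 from rfl,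
    show Matrix.diag (Matrix.of Jm) 2 = 0 from rfl, show Matrix.diag (Matrix.of Jm) 3 = 0 from rfl,
    show Matrix.diag (Matrix.of Jm) 4 = 0 from rfl, show Matrix.diag (Matrix.of Jm) 5 = 0 from rfl]
  ring

lemma Qf_smul (c : ℝ) (x : Fin 6 → ℝ) : Qf (c • x) = c ^ 2 * Qf x := by
  simp only [Qf, Pi.smul_apply, smul_eq_mul]; ring

lemma dot_smul (c c' : ℝ) (x y : Fin 6 → ℝ) :
    ∑ k, (c • x) k * (c' • y) k = c * c' * ∑ k, x k * y k := by
  rw [Finset.mul_sum]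
  exact Finset.sum_congr rfl fun k _ => by simp [smul_eq_mul]; ring

lemma dot_self_pos (x : Fin 6 → ℝ) (hx : x ≠ 0) : 0 < ∑ k, x k * x k := by
  rcases (Finset.sum_nonneg fun k _ => mul_self_nonneg (x k)).lt_or_eq with h | h
  · exact h
  · exfalso
    apply hx
    funext k
    have := (Finset.sum_eq_zero_iff_of_nonneg fun k _ => mul_self_nonneg (x k)).mp h.symm k
      (Finset.mem_univ k)
    exact mul_self_eq_zero.mp this

lemma core (P : Fin 5 → Fin 6 → ℝ) (hnz : ∀ i, P i ≠ 0)
    (horth : ∀ i j, i ≠ j → ∑ k, P i k * P j k = 0)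
    (hQ : ∀ i, Qf (P i) = 0) :
    ∃ q : Fin 6 → ℝ, q ≠ 0 ∧ (∀ i, ∑ k, P i k * q k = 0) ∧ Qf q = 0 := by
  have hlt : Module.finrank ℝ (Fin 5 → ℝ) < Module.finrank ℝ (Fin 6 → ℝ) := by
    simp [Module.finrank_fin_fun]
  obtain ⟨q, hqmem, hq0⟩ :=
    Submodule.exists_mem_ne_zero_of_ne_bot
      (LinearMap.ker_ne_bot_of_finrank_lt (f := (Matrix.of P).mulVecLin) hlt)
  have hPq : ∀ i, ∑ k, P i k * q k = 0 := by
    intro i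
    have h1 : (Matrix.of P).mulVec q = 0 := hqmem
    have := congrFun h1 i
    simpa [Matrix.mulVec, dotProduct] using this
  refine ⟨q, hq0, hPq, ?_⟩
  -- normalizing constants
  set r : Fin 5 → ℝ := fun i => Real.sqrt (∑ k, P i k * P i k) with hr
  set s : ℝ := Real.sqrt (∑ k, q k * q k) with hs
  have hrpos : ∀ i, 0 < r i := fun i => Real.sqrt_pos.mpr (dot_self_pos _ (hnz i))
  have hspos : 0 < s := Real.sqrt_pos.mpr (dot_self_pos _ hq0)
  set E : Fin 6 → Fin 6 → ℝ := Fin.snoc (fun i => (r i)⁻¹ • P i) (s⁻¹ • q) with hE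
  have hqP : ∀ i, ∑ k, q k * P i k = 0 := by
    intro i
    rw [← hPq i]
    exact Finset.sum_congr rfl fun k _ => mul_comm _ _
  have hortho : ∀ j k, ∑ m, E j m * E k m = if j = k then 1 else 0 := by
    intro j k
    induction j using Fin.lastCases with
    | cast i =>
      induction k using Fin.lastCases with
      | cast i' =>
        simp only [hE, Fin.snoc_castSucc]
        rw [dot_smul]
        by_cases h : i = i'
        · subst h
          have h1 : r i * r i = ∑ m, P i m * P i m :=
            Real.mul_self_sqrt (dot_self_pos _ (hnz i)).le
          rw [← h1, if_pos rfl]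
          have hne : r i ≠ 0 := (hrpos i).ne'
          field_simp
        · rw [if_neg (by simpa using h), horth i i' h]
          ring
      | last =>
        simp only [hE, Fin.snoc_castSucc, Fin.snoc_last]
        rw [dot_smul, hPq i]
        rw [if_neg (by exact (Fin.castSucc_lt_last i).ne)]
        ring
    | last =>
      induction k using Fin.lastCases with
      | cast i' =>
        simp only [hE, Fin.snoc_castSucc, Fin.snoc_last]
        rw [dot_smul, hqP i']
        rw [if_neg (Fin.castSucc_lt_last i').ne']
        ring
      | last =>
        simp only [hE, Fin.snoc_last]
        have h1 : s * s = ∑ m, q m * q m := Real.mul_self_sqrt (dot_self_pos _ hq0).le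
        rw [dot_smul, ← h1]
        have hne : s ≠ 0 := hspos.ne'
        rw [if_true]
        field_simp
  set U : Matrix (Fin 6) (Fin 6) ℝ := Matrix.of E with hU
  have hUUt : U * Uᵀ = 1 := by
    ext j k
    rw [Matrix.mul_apply]
    simp only [hU, Matrix.transpose_apply, Matrix.of_apply]
    rw [hortho j k]
    by_cases h : j = k
    · simp [h, Matrix.one_apply]
    · simp [h, Matrix.one_apply]
  have hUtU : Uᵀ * U = 1 := mul_eq_one_comm.mp hUUt
  have htr : Matrix.trace (U * Matrix.of Jm * Uᵀ) = 0 := by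
    rw [Matrix.trace_mul_cycle, hUtU, Matrix.one_mul, trace_J]
  have hdiag : ∀ k, (U * Matrix.of Jm * Uᵀ) k k = 2 * Qf (E k) := by
    intro k
    rw [← quad_J (E k)]
    rw [Matrix.mul_apply]
    rw [Finset.sum_comm]
    refine Finset.sum_congr rfl fun n _ => ?_
    rw [Matrix.mul_apply, Finset.sum_mul]
    refine Finset.sum_congr rfl fun m _ => ?_
    simp only [hU, Matrix.transpose_apply, Matrix.of_apply]
  have hsum : ∑ k, 2 * Qf (E k) = 0 := by
    rw [← htr, Matrix.trace]
    exact Finset.sum_congr rfl fun k _ => (hdiag k).symm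
  rw [Fin.sum_univ_castSucc] at hsum
  have hz : ∀ i : Fin 5, 2 * Qf (E i.castSucc) = 0 := by
    intro i
    simp only [hE, Fin.snoc_castSucc]
    rw [Qf_smul, hQ i]
    ring
  rw [Finset.sum_congr rfl (fun i _ => hz i), Finset.sum_const] at hsum
  simp only [smul_zero, zero_add] at hsum
  have hlast : Qf (E (Fin.last 5)) = 0 := by linarith
  rw [hE] at hlast
  simp only [Fin.snoc_last] at hlast
  rw [Qf_smul] at hlast
  have : s⁻¹ ^ 2 ≠ 0 := pow_ne_zero 2 (inv_ne_zero hspos.ne')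
  exact (mul_eq_zero.mp hlast).resolve_left this

lemma chart0 (q : Fin 6 → ℝ) (hQ : Qf q = 0) :
    pluck ![q 0, 0, -q 3, -q 4] ![0, q 0, q 1, q 2] = fun j => q 0 * q j := by
  have hQ' : q 0 * q 5 - q 1 * q 4 + q 2 * q 3 = 0 := hQ
  have h0 : pluck ![q 0, 0, -q 3, -q 4] ![0, q 0, q 1, q 2] 0 = q 0 * q 0 := by
    simp only [pluck0, Matrix.cons_val_zero, Matrix.cons_val_one, Matrix.cons_val_two,
      Matrix.cons_val_three, Matrix.head_cons, Matrix.tail_cons]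
    first | linear_combination hQ' | linear_combination -hQ' | ring
  have h1 : pluck ![q 0, 0, -q 3, -q 4] ![0, q 0, q 1, q 2] 1 = q 0 * q 1 := by
    simp only [pluck1, Matrix.cons_val_zero, Matrix.cons_val_one, Matrix.cons_val_two,
      Matrix.cons_val_three, Matrix.head_cons, Matrix.tail_cons]
    first | linear_combination hQ' | linear_combination -hQ' | ring
  have h2 : pluck ![q 0, 0, -q 3, -q 4] ![0, q 0, q 1, q 2] 2 = q 0 * q 2 := by
    simp only [pluck2, Matrix.cons_val_zero, Matrix.cons_val_one, Matrix.cons_val_two,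
      Matrix.cons_val_three, Matrix.head_cons, Matrix.tail_cons]
    first | linear_combination hQ' | linear_combination -hQ' | ring
  have h3 : pluck ![q 0, 0, -q 3, -q 4] ![0, q 0, q 1, q 2] 3 = q 0 * q 3 := by
    simp only [pluck3, Matrix.cons_val_zero, Matrix.cons_val_one, Matrix.cons_val_two,
      Matrix.cons_val_three, Matrix.head_cons, Matrix.tail_cons]
    first | linear_combination hQ' | linear_combination -hQ' | ring
  have h4 : pluck ![q 0, 0, -q 3, -q 4] ![0, q 0, q 1, q 2] 4 = q 0 * q 4 := by
    simp only [pluck4, Matrix.cons_val_zero, Matrix.cons_val_one, Matrix.cons_val_two,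
      Matrix.cons_val_three, Matrix.head_cons, Matrix.tail_cons]
    first | linear_combination hQ' | linear_combination -hQ' | ring
  have h5 : pluck ![q 0, 0, -q 3, -q 4] ![0, q 0, q 1, q 2] 5 = q 0 * q 5 := by
    simp only [pluck5, Matrix.cons_val_zero, Matrix.cons_val_one, Matrix.cons_val_two,
      Matrix.cons_val_three, Matrix.head_cons, Matrix.tail_cons]
    first | linear_combination hQ' | linear_combination -hQ' | ring
  funext j
  fin_cases j <;> first | exact h0 | exact h1 | exact h2 | exact h3 | exact h4 | exact h5

lemma chart1 (q : Fin 6 → ℝ) (hQ : Qf q = 0) :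
    pluck ![q 1, q 3, 0, -q 5] ![0, q 0, q 1, q 2] = fun j => q 1 * q j := by
  have hQ' : q 0 * q 5 - q 1 * q 4 + q 2 * q 3 = 0 := hQ
  have h0 : pluck ![q 1, q 3, 0, -q 5] ![0, q 0, q 1, q 2] 0 = q 1 * q 0 := by
    simp only [pluck0, Matrix.cons_val_zero, Matrix.cons_val_one, Matrix.cons_val_two,
      Matrix.cons_val_three, Matrix.head_cons, Matrix.tail_cons]
    first | linear_combination hQ' | linear_combination -hQ' | ring
  have h1 : pluck ![q 1, q 3, 0, -q 5] ![0, q 0, q 1, q 2] 1 = q 1 * q 1 := by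
    simp only [pluck1, Matrix.cons_val_zero, Matrix.cons_val_one, Matrix.cons_val_two,
      Matrix.cons_val_three, Matrix.head_cons, Matrix.tail_cons]
    first | linear_combination hQ' | linear_combination -hQ' | ring
  have h2 : pluck ![q 1, q 3, 0, -q 5] ![0, q 0, q 1, q 2] 2 = q 1 * q 2 := by
    simp only [pluck2, Matrix.cons_val_zero, Matrix.cons_val_one, Matrix.cons_val_two,
      Matrix.cons_val_three, Matrix.head_cons, Matrix.tail_cons]
    first | linear_combination hQ' | linear_combination -hQ' | ring
  have h3 : pluck ![q 1, q 3, 0, -q 5] ![0, q 0, q 1, q 2] 3 = q 1 * q 3 := by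
    simp only [pluck3, Matrix.cons_val_zero, Matrix.cons_val_one, Matrix.cons_val_two,
      Matrix.cons_val_three, Matrix.head_cons, Matrix.tail_cons]
    first | linear_combination hQ' | linear_combination -hQ' | ring
  have h4 : pluck ![q 1, q 3, 0, -q 5] ![0, q 0, q 1, q 2] 4 = q 1 * q 4 := by
    simp only [pluck4, Matrix.cons_val_zero, Matrix.cons_val_one, Matrix.cons_val_two,
      Matrix.cons_val_three, Matrix.head_cons, Matrix.tail_cons]
    first | linear_combination hQ' | linear_combination -hQ' | ring
  have h5 : pluck ![q 1, q 3, 0, -q 5] ![0, q 0, q 1, q 2] 5 = q 1 * q 5 := by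
    simp only [pluck5, Matrix.cons_val_zero, Matrix.cons_val_one, Matrix.cons_val_two,
      Matrix.cons_val_three, Matrix.head_cons, Matrix.tail_cons]
    first | linear_combination hQ' | linear_combination -hQ' | ring
  funext j
  fin_cases j <;> first | exact h0 | exact h1 | exact h2 | exact h3 | exact h4 | exact h5

lemma chart2 (q : Fin 6 → ℝ) (hQ : Qf q = 0) :
    pluck ![q 2, q 4, q 5, 0] ![0, q 0, q 1, q 2] = fun j => q 2 * q j := by
  have hQ' : q 0 * q 5 - q 1 * q 4 + q 2 * q 3 = 0 := hQ
  have h0 : pluck ![q 2, q 4, q 5, 0] ![0, q 0, q 1, q 2] 0 = q 2 * q 0 := by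
    simp only [pluck0, Matrix.cons_val_zero, Matrix.cons_val_one, Matrix.cons_val_two,
      Matrix.cons_val_three, Matrix.head_cons, Matrix.tail_cons]
    first | linear_combination hQ' | linear_combination -hQ' | ring
  have h1 : pluck ![q 2, q 4, q 5, 0] ![0, q 0, q 1, q 2] 1 = q 2 * q 1 := by
    simp only [pluck1, Matrix.cons_val_zero, Matrix.cons_val_one, Matrix.cons_val_two,
      Matrix.cons_val_three, Matrix.head_cons, Matrix.tail_cons]
    first | linear_combination hQ' | linear_combination -hQ' | ring
  have h2 : pluck ![q 2, q 4, q 5, 0] ![0, q 0, q 1, q 2] 2 = q 2 * q 2 := by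
    simp only [pluck2, Matrix.cons_val_zero, Matrix.cons_val_one, Matrix.cons_val_two,
      Matrix.cons_val_three, Matrix.head_cons, Matrix.tail_cons]
    first | linear_combination hQ' | linear_combination -hQ' | ring
  have h3 : pluck ![q 2, q 4, q 5, 0] ![0, q 0, q 1, q 2] 3 = q 2 * q 3 := by
    simp only [pluck3, Matrix.cons_val_zero, Matrix.cons_val_one, Matrix.cons_val_two,
      Matrix.cons_val_three, Matrix.head_cons, Matrix.tail_cons]
    first | linear_combination hQ' | linear_combination -hQ' | ring
  have h4 : pluck ![q 2, q 4, q 5, 0] ![0, q 0, q 1, q 2] 4 = q 2 * q 4 := by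
    simp only [pluck4, Matrix.cons_val_zero, Matrix.cons_val_one, Matrix.cons_val_two,
      Matrix.cons_val_three, Matrix.head_cons, Matrix.tail_cons]
    first | linear_combination hQ' | linear_combination -hQ' | ring
  have h5 : pluck ![q 2, q 4, q 5, 0] ![0, q 0, q 1, q 2] 5 = q 2 * q 5 := by
    simp only [pluck5, Matrix.cons_val_zero, Matrix.cons_val_one, Matrix.cons_val_two,
      Matrix.cons_val_three, Matrix.head_cons, Matrix.tail_cons]
    first | linear_combination hQ' | linear_combination -hQ' | ring
  funext j
  fin_cases j <;> first | exact h0 | exact h1 | exact h2 | exact h3 | exact h4 | exact h5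

lemma chart3 (q : Fin 6 → ℝ) (hQ : Qf q = 0) :
    pluck ![q 1, q 3, 0, -q 5] ![-q 0, 0, q 3, q 4] = fun j => q 3 * q j := by
  have hQ' : q 0 * q 5 - q 1 * q 4 + q 2 * q 3 = 0 := hQ
  have h0 : pluck ![q 1, q 3, 0, -q 5] ![-q 0, 0, q 3, q 4] 0 = q 3 * q 0 := by
    simp only [pluck0, Matrix.cons_val_zero, Matrix.cons_val_one, Matrix.cons_val_two,
      Matrix.cons_val_three, Matrix.head_cons, Matrix.tail_cons]
    first | linear_combination hQ' | linear_combination -hQ' | ring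
  have h1 : pluck ![q 1, q 3, 0, -q 5] ![-q 0, 0, q 3, q 4] 1 = q 3 * q 1 := by
    simp only [pluck1, Matrix.cons_val_zero, Matrix.cons_val_one, Matrix.cons_val_two,
      Matrix.cons_val_three, Matrix.head_cons, Matrix.tail_cons]
    first | linear_combination hQ' | linear_combination -hQ' | ring
  have h2 : pluck ![q 1, q 3, 0, -q 5] ![-q 0, 0, q 3, q 4] 2 = q 3 * q 2 := by
    simp only [pluck2, Matrix.cons_val_zero, Matrix.cons_val_one, Matrix.cons_val_two,
      Matrix.cons_val_three, Matrix.head_cons, Matrix.tail_cons]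
    first | linear_combination hQ' | linear_combination -hQ' | ring
  have h3 : pluck ![q 1, q 3, 0, -q 5] ![-q 0, 0, q 3, q 4] 3 = q 3 * q 3 := by
    simp only [pluck3, Matrix.cons_val_zero, Matrix.cons_val_one, Matrix.cons_val_two,
      Matrix.cons_val_three, Matrix.head_cons, Matrix.tail_cons]
    first | linear_combination hQ' | linear_combination -hQ' | ring
  have h4 : pluck ![q 1, q 3, 0, -q 5] ![-q 0, 0, q 3, q 4] 4 = q 3 * q 4 := by
    simp only [pluck4, Matrix.cons_val_zero, Matrix.cons_val_one, Matrix.cons_val_two,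
      Matrix.cons_val_three, Matrix.head_cons, Matrix.tail_cons]
    first | linear_combination hQ' | linear_combination -hQ' | ring
  have h5 : pluck ![q 1, q 3, 0, -q 5] ![-q 0, 0, q 3, q 4] 5 = q 3 * q 5 := by
    simp only [pluck5, Matrix.cons_val_zero, Matrix.cons_val_one, Matrix.cons_val_two,
      Matrix.cons_val_three, Matrix.head_cons, Matrix.tail_cons]
    first | linear_combination hQ' | linear_combination -hQ' | ring
  funext j
  fin_cases j <;> first | exact h0 | exact h1 | exact h2 | exact h3 | exact h4 | exact h5

lemma chart4 (q : Fin 6 → ℝ) (hQ : Qf q = 0) :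
    pluck ![q 2, q 4, q 5, 0] ![-q 0, 0, q 3, q 4] = fun j => q 4 * q j := by
  have hQ' : q 0 * q 5 - q 1 * q 4 + q 2 * q 3 = 0 := hQ
  have h0 : pluck ![q 2, q 4, q 5, 0] ![-q 0, 0, q 3, q 4] 0 = q 4 * q 0 := by
    simp only [pluck0, Matrix.cons_val_zero, Matrix.cons_val_one, Matrix.cons_val_two,
      Matrix.cons_val_three, Matrix.head_cons, Matrix.tail_cons]
    first | linear_combination hQ' | linear_combination -hQ' | ring
  have h1 : pluck ![q 2, q 4, q 5, 0] ![-q 0, 0, q 3, q 4] 1 = q 4 * q 1 := by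
    simp only [pluck1, Matrix.cons_val_zero, Matrix.cons_val_one, Matrix.cons_val_two,
      Matrix.cons_val_three, Matrix.head_cons, Matrix.tail_cons]
    first | linear_combination hQ' | linear_combination -hQ' | ring
  have h2 : pluck ![q 2, q 4, q 5, 0] ![-q 0, 0, q 3, q 4] 2 = q 4 * q 2 := by
    simp only [pluck2, Matrix.cons_val_zero, Matrix.cons_val_one, Matrix.cons_val_two,
      Matrix.cons_val_three, Matrix.head_cons, Matrix.tail_cons]
    first | linear_combination hQ' | linear_combination -hQ' | ring
  have h3 : pluck ![q 2, q 4, q 5, 0] ![-q 0, 0, q 3, q 4] 3 = q 4 * q 3 := by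
    simp only [pluck3, Matrix.cons_val_zero, Matrix.cons_val_one, Matrix.cons_val_two,
      Matrix.cons_val_three, Matrix.head_cons, Matrix.tail_cons]
    first | linear_combination hQ' | linear_combination -hQ' | ring
  have h4 : pluck ![q 2, q 4, q 5, 0] ![-q 0, 0, q 3, q 4] 4 = q 4 * q 4 := by
    simp only [pluck4, Matrix.cons_val_zero, Matrix.cons_val_one, Matrix.cons_val_two,
      Matrix.cons_val_three, Matrix.head_cons, Matrix.tail_cons]
    first | linear_combination hQ' | linear_combination -hQ' | ring
  have h5 : pluck ![q 2, q 4, q 5, 0] ![-q 0, 0, q 3, q 4] 5 = q 4 * q 5 := by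
    simp only [pluck5, Matrix.cons_val_zero, Matrix.cons_val_one, Matrix.cons_val_two,
      Matrix.cons_val_three, Matrix.head_cons, Matrix.tail_cons]
    first | linear_combination hQ' | linear_combination -hQ' | ring
  funext j
  fin_cases j <;> first | exact h0 | exact h1 | exact h2 | exact h3 | exact h4 | exact h5

lemma chart5 (q : Fin 6 → ℝ) (hQ : Qf q = 0) :
    pluck ![q 2, q 4, q 5, 0] ![-q 1, -q 3, 0, q 5] = fun j => q 5 * q j := by
  have hQ' : q 0 * q 5 - q 1 * q 4 + q 2 * q 3 = 0 := hQ
  have h0 : pluck ![q 2, q 4, q 5, 0] ![-q 1, -q 3, 0, q 5] 0 = q 5 * q 0 := by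
    simp only [pluck0, Matrix.cons_val_zero, Matrix.cons_val_one, Matrix.cons_val_two,
      Matrix.cons_val_three, Matrix.head_cons, Matrix.tail_cons]
    first | linear_combination hQ' | linear_combination -hQ' | ring
  have h1 : pluck ![q 2, q 4, q 5, 0] ![-q 1, -q 3, 0, q 5] 1 = q 5 * q 1 := by
    simp only [pluck1, Matrix.cons_val_zero, Matrix.cons_val_one, Matrix.cons_val_two,
      Matrix.cons_val_three, Matrix.head_cons, Matrix.tail_cons]
    first | linear_combination hQ' | linear_combination -hQ' | ring
  have h2 : pluck ![q 2, q 4, q 5, 0] ![-q 1, -q 3, 0, q 5] 2 = q 5 * q 2 := by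
    simp only [pluck2, Matrix.cons_val_zero, Matrix.cons_val_one, Matrix.cons_val_two,
      Matrix.cons_val_three, Matrix.head_cons, Matrix.tail_cons]
    first | linear_combination hQ' | linear_combination -hQ' | ring
  have h3 : pluck ![q 2, q 4, q 5, 0] ![-q 1, -q 3, 0, q 5] 3 = q 5 * q 3 := by
    simp only [pluck3, Matrix.cons_val_zero, Matrix.cons_val_one, Matrix.cons_val_two,
      Matrix.cons_val_three, Matrix.head_cons, Matrix.tail_cons]
    first | linear_combination hQ' | linear_combination -hQ' | ring
  have h4 : pluck ![q 2, q 4, q 5, 0] ![-q 1, -q 3, 0, q 5] 4 = q 5 * q 4 := by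
    simp only [pluck4, Matrix.cons_val_zero, Matrix.cons_val_one, Matrix.cons_val_two,
      Matrix.cons_val_three, Matrix.head_cons, Matrix.tail_cons]
    first | linear_combination hQ' | linear_combination -hQ' | ring
  have h5 : pluck ![q 2, q 4, q 5, 0] ![-q 1, -q 3, 0, q 5] 5 = q 5 * q 5 := by
    simp only [pluck5, Matrix.cons_val_zero, Matrix.cons_val_one, Matrix.cons_val_two,
      Matrix.cons_val_three, Matrix.head_cons, Matrix.tail_cons]
    first | linear_combination hQ' | linear_combination -hQ' | ring
  funext j
  fin_cases j <;> first | exact h0 | exact h1 | exact h2 | exact h3 | exact h4 | exact h5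

lemma chart (q : Fin 6 → ℝ) (hQ : Qf q = 0) (k : Fin 6) :
    ∃ V W : Fin 4 → ℝ, pluck V W = fun j => q k * q j := by
  fin_cases k
  · exact ⟨_, _, chart0 q hQ⟩
  · exact ⟨_, _, chart1 q hQ⟩
  · exact ⟨_, _, chart2 q hQ⟩
  · exact ⟨_, _, chart3 q hQ⟩
  · exact ⟨_, _, chart4 q hQ⟩
  · exact ⟨_, _, chart5 q hQ⟩

end FUPBAux

/-- There is no real FUPB of five orthogonal decomposable states in `⋀² ℂ⁴`:
given five pairwise orthogonal nonzero decomposable 2-vectors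
`ψ i = a i ∧ b i` with all `a i`, `b i` having real entries, there exists a
nonzero decomposable 2-vector with real entries orthogonal to all five. -/
theorem no_real_FUPB_in_wedge2_C4
    (a b : Fin 5 → EuclideanSpace ℂ (Fin 4))
    (hreal : ∀ i, (∀ m, (a i m).im = 0) ∧ (∀ m, (b i m).im = 0))
    (hne : ∀ i, wedge ![a i, b i] ≠ 0)
    (horth : ∀ i j, i ≠ j → ⟪wedge ![a i, b i], wedge ![a j, b j]⟫_ℂ = 0) :
    ∃ v w : EuclideanSpace ℂ (Fin 4),
      (∀ m, (v m).im = 0) ∧ (∀ m, (w m).im = 0) ∧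
      wedge ![v, w] ≠ 0 ∧
      ∀ i, ⟪wedge ![a i, b i], wedge ![v, w]⟫_ℂ = 0 := by
  classical
  have ha : ∀ i, a i = FUPBAux.cv fun m => (a i m).re := by
    intro i; ext m
    exact Complex.ext rfl (((hreal i).1 m).trans (Complex.ofReal_im ((a i m).re)).symm)
  have hb : ∀ i, b i = FUPBAux.cv fun m => (b i m).re := by
    intro i; ext m
    exact Complex.ext rfl (((hreal i).2 m).trans (Complex.ofReal_im ((b i m).re)).symm)
  obtain ⟨q, hq0, hPq, hQq⟩ := FUPBAux.core
    (fun i => FUPBAux.pluck (fun m => (a i m).re) (fun m => (b i m).re))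
    (fun i h => hne i (by
      rw [ha i, hb i]
      exact (FUPBAux.wedge_eq_zero_iff _ _).mpr h))
    (fun i j hij => by
      have h2 := horth i j hij
      rw [ha i, hb i, ha j, hb j, FUPBAux.inner_wedge] at h2
      have h3 : (2 : ℝ) * ∑ k, FUPBAux.pluck (fun m => (a i m).re) (fun m => (b i m).re) k *
          FUPBAux.pluck (fun m => (a j m).re) (fun m => (b j m).re) k = 0 :=
        Complex.ofReal_eq_zero.mp h2
      linarith)
    (fun i => FUPBAux.Qf_pluck _ _)
  obtain ⟨k, hk⟩ := Function.ne_iff.mp hq0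
  have hk : q k ≠ 0 := by simpa using hk
  obtain ⟨V, W, hVW⟩ := FUPBAux.chart q hQq k
  refine ⟨FUPBAux.cv V, FUPBAux.cv W, fun m => Complex.ofReal_im (V m),
    fun m => Complex.ofReal_im (W m), ?_, ?_⟩
  · rw [Ne, FUPBAux.wedge_eq_zero_iff, hVW]
    intro hzero
    have h1 : q k * q k = 0 := congrFun hzero k
    exact hk (mul_self_eq_zero.mp h1)
  · intro i
    rw [ha i, hb i, FUPBAux.inner_wedge]
    have h1 : ∑ j, FUPBAux.pluck (fun m => (a i m).re) (fun m => (b i m).re) j *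
        FUPBAux.pluck V W j = 0 := by
      calc ∑ j, FUPBAux.pluck (fun m => (a i m).re) (fun m => (b i m).re) j *
            FUPBAux.pluck V W j
          = q k * ∑ j, FUPBAux.pluck (fun m => (a i m).re) (fun m => (b i m).re) j * q j := by
            rw [Finset.mul_sum]
            refine Finset.sum_congr rfl fun j _ => ?_
            have h2 : FUPBAux.pluck V W j = q k * q j := congrFun hVW j
            rw [h2]; ring
        _ = 0 := by rw [hPq i]; ring
    rw [h1]
    norm_num
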